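/- The minimal number of handovers over all feasible solutions is at most M − 1, where M is the number of GBSs: any feasible solution can be transformed into one whose association sequence has pairwise distinct entries (hence length at most M, i.e., at most M − 1 handovers) without increasing travel time or violating coverage constraints. -/

import Mathlib

open Finset

lemma shrink_aux (g : ℕ → EuclideanSpace ℝ (Fin 2)) (d : ℕ → ℝ) :
    ∀ N (u : ℕ → EuclideanSpace ℝ (Fin 2)) (I : ℕ → ℕ),
    (∀ i ≤ N, segment ℝ (u i) (u (i + 1)) ⊆ Metric.closedBall (g (I i)) (d (I i))) →
    ∃ (N' : ℕ) (u' : ℕ → EuclideanSpace ℝ (Fin 2)) (I' : ℕ → ℕ),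
      N' ≤ N ∧
      (∀ i ≤ N', ∀ j ≤ N', I' i = I' j → i = j) ∧
      u' 0 = u 0 ∧ u' (N' + 1) = u (N + 1) ∧
      (∀ i ≤ N', ∃ j ≤ N, I' i = I j) ∧
      (∀ i ≤ N', segment ℝ (u' i) (u' (i + 1)) ⊆
        Metric.closedBall (g (I' i)) (d (I' i))) ∧
      (∑ i ∈ Finset.range (N' + 1), ‖u' (i + 1) - u' i‖) ≤
        (∑ i ∈ Finset.range (N + 1), ‖u (i + 1) - u i‖) := by
  intro N
  induction N using Nat.strong_induction_on with
  | _ N ih =>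
    intro u I hcov
    by_cases hinj : ∀ i ≤ N, ∀ j ≤ N, I i = I j → i = j
    · exact ⟨N, u, I, le_rfl, hinj, rfl, rfl, fun i hi => ⟨i, hi, rfl⟩, hcov, le_rfl⟩
    · push_neg at hinj
      obtain ⟨a, ha, c, hc, hIac, hne⟩ := hinj
      obtain ⟨i, j, hij, hjN, hIeq⟩ : ∃ i j, i < j ∧ j ≤ N ∧ I i = I j := by
        rcases lt_or_gt_of_ne hne with h | h
        · exact ⟨a, c, h, hc, hIac⟩
        · exact ⟨c, a, h, ha, hIac.symm⟩
      obtain ⟨t, rfl⟩ : ∃ t, j = i + t + 1 := ⟨j - i - 1, by omega⟩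
      obtain ⟨s, rfl⟩ : ∃ s, N = i + t + 1 + s := ⟨N - (i + t + 1), by omega⟩
      set u₂ : ℕ → EuclideanSpace ℝ (Fin 2) :=
        fun k => if k ≤ i then u k else u (k + (t + 1)) with hu₂
      set I₂ : ℕ → ℕ := fun k => if k ≤ i then I k else I (k + (t + 1)) with hI₂
      have hcov₂ : ∀ k ≤ i + s, segment ℝ (u₂ k) (u₂ (k + 1)) ⊆
          Metric.closedBall (g (I₂ k)) (d (I₂ k)) := by
        intro k hk
        rcases lt_trichotomy k i with h | h | h
        · have e1 : u₂ k = u k := if_pos (by omega)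
          have e2 : u₂ (k + 1) = u (k + 1) := if_pos (by omega)
          have e3 : I₂ k = I k := if_pos (by omega)
          rw [e1, e2, e3]; exact hcov k (by omega)
        · subst h
          have e1 : u₂ k = u k := if_pos le_rfl
          have e2 : u₂ (k + 1) = u (k + t + 2) := by
            simp only [hu₂]
            rw [if_neg (by omega : ¬ k + 1 ≤ k), show k + 1 + (t + 1) = k + t + 2 from by omega]
          have e3 : I₂ k = I k := if_pos le_rfl
          rw [e1, e2, e3]
          apply (convex_closedBall (g (I k)) (d (I k))).segment_subset
          · exact hcov k (by omega) (left_mem_segment ℝ _ _)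
          · have h2 := hcov (k + t + 1) (by omega)
              (right_mem_segment ℝ (u (k + t + 1)) (u (k + t + 1 + 1)))
            rw [← hIeq] at h2
            have e4 : k + t + 1 + 1 = k + t + 2 := by omega
            rwa [e4] at h2
        · have hni : ¬ (k ≤ i) := by omega
          have hni' : ¬ (k + 1 ≤ i) := by omega
          have e1 : u₂ k = u (k + (t + 1)) := if_neg hni
          have e2 : u₂ (k + 1) = u (k + (t + 1) + 1) := by
            simp only [hu₂]
            rw [if_neg hni', show k + 1 + (t + 1) = k + (t + 1) + 1 from by omega]
          have e3 : I₂ k = I (k + (t + 1)) := if_neg hni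
          rw [e1, e2, e3]
          exact hcov (k + (t + 1)) (by omega)
      obtain ⟨N', u', I', hle, hinj', h0, hend, hrange, hcov', hsum⟩ :=
        ih (i + s) (by omega) u₂ I₂ hcov₂
      refine ⟨N', u', I', by omega, hinj', ?_, ?_, ?_, hcov', ?_⟩
      · rw [h0, hu₂]; simp only [if_pos (Nat.zero_le i)]
      · rw [hend]
        simp only [hu₂]
        rw [if_neg (by omega : ¬ i + s + 1 ≤ i),
          show i + s + 1 + (t + 1) = i + t + 1 + s + 1 from by omega]
      · intro k hk
        obtain ⟨m, hm, hm'⟩ := hrange k hk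
        by_cases h : m ≤ i
        · exact ⟨m, by omega, hm'.trans (if_pos h)⟩
        · exact ⟨m + (t + 1), by omega, hm'.trans (if_neg h)⟩
      · refine hsum.trans ?_
        have hnew : ∑ k ∈ range (i + s + 1), ‖u₂ (k + 1) - u₂ k‖ =
            (∑ k ∈ range i, ‖u (k + 1) - u k‖) + (‖u (i + t + 2) - u i‖ +
              ∑ k ∈ range s, ‖u (i + t + 2 + k + 1) - u (i + t + 2 + k)‖) := by
          rw [show i + s + 1 = i + (1 + s) from by omega, Finset.sum_range_add,
            Finset.sum_range_add, Finset.sum_range_one]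
          congr 1
          · refine Finset.sum_congr rfl fun k hk => ?_
            simp only [Finset.mem_range] at hk
            simp only [hu₂]
            rw [if_pos (by omega : k + 1 ≤ i), if_pos (by omega : k ≤ i)]
          congr 1
          · simp only [hu₂]
            rw [if_neg (by omega : ¬ i + 0 + 1 ≤ i), if_pos (by omega : i + 0 ≤ i),
              show i + 0 + 1 + (t + 1) = i + t + 2 from by omega,
              show i + 0 = i from by omega]
          · refine Finset.sum_congr rfl fun k hk => ?_
            simp only [hu₂]
            rw [if_neg (by omega : ¬ i + (1 + k) + 1 ≤ i),
              if_neg (by omega : ¬ i + (1 + k) ≤ i),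
              show i + (1 + k) + 1 + (t + 1) = i + t + 2 + k + 1 from by omega,
              show i + (1 + k) + (t + 1) = i + t + 2 + k from by omega]
        have hold : ∑ k ∈ range (i + t + 1 + s + 1), ‖u (k + 1) - u k‖ =
            (∑ k ∈ range i, ‖u (k + 1) - u k‖) +
              ((∑ k ∈ range (t + 2), ‖u (i + k + 1) - u (i + k)‖) +
              ∑ k ∈ range s, ‖u (i + t + 2 + k + 1) - u (i + t + 2 + k)‖) := by
          rw [show i + t + 1 + s + 1 = i + (t + 2 + s) from by omega,
            Finset.sum_range_add, Finset.sum_range_add]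
          congr 1
          congr 1
          refine Finset.sum_congr rfl fun k hk => ?_
          rw [show i + (t + 2 + k) = i + t + 2 + k from by omega]
        have hmid : ‖u (i + t + 2) - u i‖ ≤
            ∑ k ∈ range (t + 2), ‖u (i + k + 1) - u (i + k)‖ := by
          have h1 := dist_le_range_sum_dist (fun k => u (i + k)) (t + 2)
          rw [show i + (t + 2) = i + t + 2 from by omega, dist_comm, dist_eq_norm] at h1
          refine h1.trans (le_of_eq (Finset.sum_congr rfl fun k hk => ?_))
          rw [dist_comm, dist_eq_norm, show i + (k + 1) = i + k + 1 from by omega]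
        rw [hnew, hold]
        exact add_le_add_right (add_le_add_left hmid _) _

theorem at_most_M_minus_one_handovers
    (M N : ℕ) (hM : 1 ≤ M) (g : ℕ → EuclideanSpace ℝ (Fin 2)) (d : ℕ → ℝ)
    (Vmax Tmax : ℝ) (hV : 0 < Vmax)
    (u : ℕ → EuclideanSpace ℝ (Fin 2)) (I : ℕ → ℕ)
    (hIM : ∀ i ≤ N, I i < M)
    (hcov : ∀ i ≤ N, segment ℝ (u i) (u (i + 1)) ⊆ Metric.closedBall (g (I i)) (d (I i)))
    (htime : (∑ i ∈ Finset.range (N + 1), ‖u (i + 1) - u i‖) ≤ Tmax * Vmax) :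
    ∃ (N' : ℕ) (u' : ℕ → EuclideanSpace ℝ (Fin 2)) (I' : ℕ → ℕ),
      N' ≤ M - 1 ∧
      (∀ i ≤ N', I' i < M) ∧
      (∀ i ≤ N', ∀ j ≤ N', I' i = I' j → i = j) ∧
      u' 0 = u 0 ∧ u' (N' + 1) = u (N + 1) ∧
      (∀ i ≤ N', segment ℝ (u' i) (u' (i + 1)) ⊆
        Metric.closedBall (g (I' i)) (d (I' i))) ∧
      (∑ i ∈ Finset.range (N' + 1), ‖u' (i + 1) - u' i‖) ≤
        (∑ i ∈ Finset.range (N + 1), ‖u (i + 1) - u i‖) ∧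
      (∑ i ∈ Finset.range (N' + 1), ‖u' (i + 1) - u' i‖) ≤ Tmax * Vmax := by
  obtain ⟨N', u', I', hle, hinj, h0, hend, hrange, hcov', hsum⟩ :=
    shrink_aux g d N u I hcov
  have hIM' : ∀ i ≤ N', I' i < M := by
    intro i hi
    obtain ⟨j, hj, hj'⟩ := hrange i hi
    rw [hj']; exact hIM j hj
  have hcard : N' + 1 ≤ M := by
    have hinjf : Function.Injective
        (fun k : Fin (N' + 1) => (⟨I' k, hIM' k (by omega)⟩ : Fin M)) := by
      intro x y hxy
      simp only [Fin.mk.injEq] at hxy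
      exact Fin.ext (hinj x (by omega) y (by omega) hxy)
    simpa using Fintype.card_le_of_injective _ hinjf
  exact ⟨N', u', I', by omega, hIM', hinj, h0, hend, hcov', hsum, hsum.trans htime⟩
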